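/- arXiv:1909.02340 — 4 statements merged into one kernel-verified Lean document; each statement's English description precedes it below -/
import Mathlib

section
/- Let n be a positive integer. In the field ℚ(t), the rational function V(t) = 1 + (1 - t^{2n})(1 - t^{-2n})(t^{2n} - t^{-2n})²(t + 1 + t^{-1}) / ((1+t)²(1+t^{-1})²) is actually a Laurent polynomial in t, and satisfies V(1) = 1. -/
set_option maxHeartbeats 2000000


open RatFunc

/-- The rational function V(t) = 1 + (1-t^{2n})(1-t^{-2n})(t^{2n}-t^{-2n})²(t+1+t⁻¹)
/((1+t)²(1+t⁻¹)²) is a Laurent polynomial in t and satisfies V(1) = 1. -/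
theorem stmt10 (n : ℕ) (hn : 0 < n) (V : RatFunc ℚ)
    (hV : V = 1 + (1 - RatFunc.X ^ (2 * n)) * (1 - (RatFunc.X)⁻¹ ^ (2 * n))
        * (RatFunc.X ^ (2 * n) - (RatFunc.X)⁻¹ ^ (2 * n)) ^ 2
        * (RatFunc.X + 1 + (RatFunc.X)⁻¹)
        / ((1 + RatFunc.X) ^ 2 * (1 + (RatFunc.X)⁻¹) ^ 2)) :
    (∃ (p : Polynomial ℚ) (k : ℕ),
        V = algebraMap (Polynomial ℚ) (RatFunc ℚ) p / RatFunc.X ^ k) ∧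
    RatFunc.eval (RingHom.id ℚ) 1 V = 1 := by
  obtain ⟨m, rfl⟩ : ∃ m, n = m + 1 := ⟨n - 1, by omega⟩
  -- factor out (X+1) from 1 - X^(2(m+1))
  have hdvd : (Polynomial.X - Polynomial.C (-1 : ℚ)) ∣ (1 - Polynomial.X ^ (2 * (m + 1))) := by
    rw [Polynomial.dvd_iff_isRoot]
    simp [Polynomial.IsRoot, pow_mul]
  obtain ⟨q, hq⟩ := hdvd
  have hq' : (1 : Polynomial ℚ) - Polynomial.X ^ (2 * (m + 1)) = (Polynomial.X + 1) * q := by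
    rw [hq, map_neg, Polynomial.C_1]; ring
  set p : Polynomial ℚ := Polynomial.X ^ (6 * m + 5)
      - q ^ 4 * (1 + Polynomial.X ^ (2 * (m + 1))) ^ 2
        * (Polynomial.X ^ 2 + Polynomial.X + 1) with hp
  have hx : (RatFunc.X : RatFunc ℚ) ≠ 0 := RatFunc.X_ne_zero
  have h1 : (RatFunc.X : RatFunc ℚ) + 1 ≠ 0 := by
    have : (RatFunc.X : RatFunc ℚ) + 1 = algebraMap (Polynomial ℚ) (RatFunc ℚ) (Polynomial.X + 1) := by
      simp
    rw [this]
    exact RatFunc.algebraMap_ne_zero (by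
      intro h
      have := congrArg (Polynomial.eval 0) h
      simp at this)
  have hQ : (1 : RatFunc ℚ) - RatFunc.X ^ (2 * (m + 1)) = (RatFunc.X + 1) * algebraMap (Polynomial ℚ) (RatFunc ℚ) q := by
    have := congrArg (algebraMap (Polynomial ℚ) (RatFunc ℚ)) hq'
    simpa [map_sub, map_mul, map_add, map_pow, map_one] using this
  have hs : (RatFunc.X : RatFunc ℚ) ^ (2 * (m + 1)) = 1 - (RatFunc.X + 1) * algebraMap (Polynomial ℚ) (RatFunc ℚ) q := by
    linear_combination -hQ
  have hs0 : (1 : RatFunc ℚ) - (RatFunc.X + 1) * algebraMap (Polynomial ℚ) (RatFunc ℚ) q ≠ 0 := by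
    rw [← hs]; exact pow_ne_zero _ hx
  have hk : V = algebraMap (Polynomial ℚ) (RatFunc ℚ) p / RatFunc.X ^ (6 * m + 5) := by
    have h65 : (RatFunc.X : RatFunc ℚ) ^ (6 * m + 5)
        = (1 - (RatFunc.X + 1) * algebraMap (Polynomial ℚ) (RatFunc ℚ) q) ^ 3 / RatFunc.X := by
      rw [eq_div_iff hx, ← hs, ← pow_mul, ← pow_succ]
      congr 1
      omega
    rw [hV, hp]
    simp only [map_sub, map_mul, map_add, map_pow, map_one, RatFunc.algebraMap_X]
    rw [inv_pow, hs, h65]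
    have h1' : (1 : RatFunc ℚ) + RatFunc.X ≠ 0 := by rwa [add_comm] at h1
    field_simp [hx, h1', hs0]
    ring
  refine ⟨⟨p, 6 * m + 5, hk⟩, ?_⟩
  -- evaluation at 1
  have hXk : (Polynomial.X : Polynomial ℚ) ^ (6 * m + 5) ≠ 0 :=
    pow_ne_zero _ Polynomial.X_ne_zero
  have hdvd2 : V.denom ∣ Polynomial.X ^ (6 * m + 5) := by
    rw [RatFunc.denom_dvd hXk]
    exact ⟨p, by rw [hk, map_pow, RatFunc.algebraMap_X]⟩
  obtain ⟨r, hr⟩ := hdvd2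
  have hden : Polynomial.eval₂ (RingHom.id ℚ) 1 V.denom ≠ 0 := by
    intro h
    have := congrArg (Polynomial.eval₂ (RingHom.id ℚ) 1) hr
    rw [Polynomial.eval₂_mul, h, zero_mul] at this
    simp at this
  have hmul : V * RatFunc.X ^ (6 * m + 5) = algebraMap (Polynomial ℚ) (RatFunc ℚ) p := by
    rw [hk, div_mul_cancel₀]
    exact pow_ne_zero _ hx
  have e1 : RatFunc.eval (RingHom.id ℚ) 1 (V * RatFunc.X ^ (6 * m + 5))
      = RatFunc.eval (RingHom.id ℚ) 1 V * RatFunc.eval (RingHom.id ℚ) 1 (RatFunc.X ^ (6 * m + 5)) := by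
    apply RatFunc.eval_mul _ _ hden
    have : (RatFunc.X : RatFunc ℚ) ^ (6 * m + 5) = algebraMap (Polynomial ℚ) (RatFunc ℚ) (Polynomial.X ^ (6 * m + 5)) := by
      rw [map_pow, RatFunc.algebraMap_X]
    rw [this, RatFunc.denom_algebraMap]
    simp
  have e2 : RatFunc.eval (RingHom.id ℚ) 1 (RatFunc.X ^ (6 * m + 5)) = 1 := by
    have : (RatFunc.X : RatFunc ℚ) ^ (6 * m + 5) = algebraMap (Polynomial ℚ) (RatFunc ℚ) (Polynomial.X ^ (6 * m + 5)) := by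
      rw [map_pow, RatFunc.algebraMap_X]
    rw [this, RatFunc.eval_algebraMap]
    simp
  have hq1 : q.eval 1 = 0 := by
    have := congrArg (Polynomial.eval 1) hq'
    simp at this
    linarith
  have e3 : RatFunc.eval (RingHom.id ℚ) 1 (algebraMap (Polynomial ℚ) (RatFunc ℚ) p) = 1 := by
    rw [RatFunc.eval_algebraMap]
    simp [hp, hq1]
  rw [← hmul, e1, e2, mul_one] at e3
  exact e3
end

section
/- Let n be a positive integer and let V(t) = 1 + (1 - t^{2n})(1 - t^{-2n})(t^{2n} - t^{-2n})²(t + 1 + t^{-1}) / ((1+t)²(1+t^{-1})²). Then the coefficient of h⁴ in the Taylor expansion of V(e^h) at h = 0 equals -12n⁴. -/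
open PowerSeries

/-- The coefficient of h⁴ in V(e^h), where V is the Jones polynomial of
C[4n,-2n,-2n,4n], equals -12 n⁴. -/
theorem stmt11 (n : ℕ) (hn : 0 < n)
    (E F W : PowerSeries ℚ)
    (hE : E = PowerSeries.exp ℚ)
    (hF : F = PowerSeries.rescale (-1) (PowerSeries.exp ℚ))
    (hW : W = 1 + (1 - E ^ (2 * n)) * (1 - F ^ (2 * n))
        * (E ^ (2 * n) - F ^ (2 * n)) ^ 2 * (E + 1 + F)
        * (((1 + E) ^ 2 * (1 + F) ^ 2)⁻¹)) :
    PowerSeries.coeff 4 W = -12 * (n : ℚ) ^ 4 := by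
  have hEn : E ^ (2 * n) = rescale ((2 * n : ℕ) : ℚ) (exp ℚ) := by
    rw [hE, exp_pow_eq_rescale_exp]
  have hFn : F ^ (2 * n) = rescale (-((2 * n : ℕ) : ℚ)) (exp ℚ) := by
    rw [hF, ← map_pow, exp_pow_eq_rescale_exp, rescale_rescale]
    ring_nf
  have cE : constantCoeff E = 1 := by rw [hE]; simp [constantCoeff_exp]
  have cF : constantCoeff F = 1 := by
    rw [hF, ← coeff_zero_eq_constantCoeff_apply, coeff_rescale]
    simp [coeff_exp]
  have crs : ∀ a : ℚ, constantCoeff (rescale a (exp ℚ)) = 1 := by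
    intro a
    rw [← coeff_zero_eq_constantCoeff_apply, coeff_rescale]
    simp [coeff_exp]
  obtain ⟨g1, hg1⟩ : (X : ℚ⟦X⟧) ∣ (1 - E ^ (2 * n)) := by
    rw [X_dvd_iff, hEn, map_sub, crs]; simp
  obtain ⟨g2, hg2⟩ : (X : ℚ⟦X⟧) ∣ (1 - F ^ (2 * n)) := by
    rw [X_dvd_iff, hFn, map_sub, crs]; simp
  obtain ⟨g3, hg3⟩ : (X : ℚ⟦X⟧) ∣ (E ^ (2 * n) - F ^ (2 * n)) := by
    rw [X_dvd_iff, hEn, hFn, map_sub, crs, crs]; simp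
  have cg1 : constantCoeff g1 = -(2 * n : ℚ) := by
    have := congrArg (coeff 1) hg1
    rw [coeff_succ_X_mul 0, coeff_zero_eq_constantCoeff_apply] at this
    rw [← this, hEn, map_sub, coeff_rescale, coeff_exp]
    simp [Nat.factorial]
  have cg2 : constantCoeff g2 = (2 * n : ℚ) := by
    have := congrArg (coeff 1) hg2
    rw [coeff_succ_X_mul 0, coeff_zero_eq_constantCoeff_apply] at this
    rw [← this, hFn, map_sub, coeff_rescale, coeff_exp]
    simp [Nat.factorial]
  have cg3 : constantCoeff g3 = (4 * n : ℚ) := by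
    have := congrArg (coeff 1) hg3
    rw [coeff_succ_X_mul 0, coeff_zero_eq_constantCoeff_apply] at this
    rw [← this, hEn, hFn, map_sub, coeff_rescale, coeff_rescale, coeff_exp]
    simp [Nat.factorial]
    push_cast
    ring
  set B : ℚ⟦X⟧ := (E + 1 + F) * (((1 + E) ^ 2 * (1 + F) ^ 2)⁻¹) with hB
  have cB : constantCoeff B = 3 / 16 := by
    rw [hB, map_mul, constantCoeff_inv]
    simp [cE, cF]
    norm_num
  have hW4 : W = 1 + (g1 * g2 * g3 ^ 2 * B) * X ^ 4 := by
    rw [hW, hg1, hg2, hg3, hB]; ring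
  have key : coeff 4 ((g1 * g2 * g3 ^ 2 * B) * X ^ 4)
      = constantCoeff (g1 * g2 * g3 ^ 2 * B) := by
    simpa only [zero_add, coeff_zero_eq_constantCoeff_apply] using coeff_mul_X_pow (g1 * g2 * g3 ^ 2 * B) 4 0
  rw [hW4, map_add, key]
  simp only [map_mul, map_pow, cg1, cg2, cg3, cB]
  simp
  ring
end

section
/- The continued fraction identities [2x, 2y, -2(x+y), 2x] = [2x, 2y-1, 1, 2x+2y-2, 1, 2x-1] hold: both continued fractions (with convention [a₁,…,a_k] = a₁ + 1/(a₂ + 1/(⋯ + 1/a_k))) evaluate to the same rational number for all integers x ≥ 1, y ≥ 1. -/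
/-- Evaluation of a continued fraction [a₁,…,a_k] = a₁ + 1/(a₂ + 1/(⋯ + 1/a_k))
in ℚ (with the junk convention 0⁻¹ = 0 handling the empty tail). -/
def cfrac : List ℤ → ℚ
  | [] => 0
  | a :: l => (a : ℚ) + (cfrac l)⁻¹

lemma inv_pos_bd {a c : ℚ} (hc : 0 < c) (h : c ≤ a) : 0 < a⁻¹ ∧ a⁻¹ ≤ c⁻¹ := by
  have ha : 0 < a := lt_of_lt_of_le hc h
  exact ⟨inv_pos.mpr ha, inv_anti₀ hc h⟩

lemma inv_neg_bd {a c : ℚ} (hc : c < 0) (h : a ≤ c) : a⁻¹ < 0 ∧ c⁻¹ ≤ a⁻¹ := by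
  have ha : a < 0 := lt_of_le_of_lt h hc
  constructor
  · exact inv_neg''.mpr ha
  · have := inv_pos_bd (a := -a) (c := -c) (by linarith) (by linarith)
    rw [inv_neg, inv_neg] at this
    linarith [this.2]

set_option maxHeartbeats 1000000 in
theorem stmt16 (x y : ℤ) (hx : 1 ≤ x) (hy : 1 ≤ y) :
    cfrac [2 * x, 2 * y, -2 * (x + y), 2 * x]
      = cfrac [2 * x, 2 * y - 1, 1, 2 * x + 2 * y - 2, 1, 2 * x - 1] := by
  have hX : (1:ℚ) ≤ (x:ℚ) := by exact_mod_cast hx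
  have hY : (1:ℚ) ≤ (y:ℚ) := by exact_mod_cast hy
  set X := (x:ℚ); set Y := (y:ℚ)
  simp only [cfrac]
  push_cast
  rw [inv_zero, add_zero, add_zero]
  -- LHS chain
  have h1 : (0:ℚ) < 2*X := by linarith
  have b1 := inv_pos_bd (a := 2*X) (c := 2) (by norm_num) (by linarith)
  have h2 : -2*(X+Y) + (2*X)⁻¹ ≤ -7/2 := by linarith [b1.2]
  have b2 := inv_neg_bd (a := -2*(X+Y) + (2*X)⁻¹) (c := -7/2) (by norm_num) h2
  have h3 : (0:ℚ) < 2*Y + (-2*(X+Y) + (2*X)⁻¹)⁻¹ := by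
    have : (-7/2 : ℚ)⁻¹ = -2/7 := by norm_num
    linarith [b2.2]
  -- RHS chain
  have r1 : (0:ℚ) < 2*X - 1 := by linarith
  have r2 : (0:ℚ) < 1 + (2*X-1)⁻¹ := by positivity
  have r3 : (0:ℚ) < 2*X + 2*Y - 2 + (1 + (2*X-1)⁻¹)⁻¹ := by linarith [inv_pos.mpr r2]
  have r4 : (0:ℚ) < 1 + (2*X + 2*Y - 2 + (1 + (2*X-1)⁻¹)⁻¹)⁻¹ := by
    linarith [inv_pos.mpr r3]
  have b5 := inv_pos_bd (a := 1 + (2*X + 2*Y - 2 + (1 + (2*X-1)⁻¹)⁻¹)⁻¹) (c := 1) (by norm_num) (by linarith [inv_pos.mpr r3])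
  have r5 : (0:ℚ) < 2*Y - 1 + (1 + (2*X + 2*Y - 2 + (1 + (2*X-1)⁻¹)⁻¹)⁻¹)⁻¹ := by
    linarith [b5.1]
  have e2 : -2*(X+Y) + (2*X)⁻¹ ≠ 0 := ne_of_lt (lt_of_le_of_lt h2 (by norm_num))
  field_simp
  have hAneg : -(2*(X+Y)*(2*X)) + 1 < 0 := by nlinarith
  have hBpos : (0:ℚ) < (2*X+2*Y-2)*(2*X) + (2*X-1) := by nlinarith
  have hC : (0:ℚ) < 1 + 2*X/((2*X+2*Y-2)*(2*X) + (2*X-1)) := by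
    have := div_pos h1 hBpos
    linarith
  have hL : (0:ℚ) < 2*Y + 2*X/(-(2*(X+Y)*(2*X)) + 1) := by
    have hgt : (-1:ℚ) < 2*X/(-(2*(X+Y)*(2*X)) + 1) := by
      rw [lt_div_iff_of_neg hAneg]; nlinarith
    linarith
  have hR : (0:ℚ) < 2*Y - 1 + 1/(1 + 2*X/((2*X+2*Y-2)*(2*X) + (2*X-1))) := by
    have := one_div_pos.mpr hC
    linarith
  have hX' : (1:ℚ) ≤ (x:ℚ) := hX
  have hY' : (1:ℚ) ≤ (y:ℚ) := hY
  clear_value X Y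
  generalize (x:ℚ) = a at *
  generalize (y:ℚ) = b at *
  ring
  congr 1
  have q1 : (0:ℚ) < -1 + a * 2 := by linarith
  have q2 : (0:ℚ) < 1 + (-1 + a * 2)⁻¹ := by positivity
  have q3 : (0:ℚ) < -2 + a * 2 + b * 2 + (1 + (-1 + a * 2)⁻¹)⁻¹ := by
    have := inv_pos.mpr q2; linarith
  have q4 : (0:ℚ) < 1 + (-2 + a * 2 + b * 2 + (1 + (-1 + a * 2)⁻¹)⁻¹)⁻¹ := by positivity
  have q5 : (0:ℚ) < -1 + b * 2 + (1 + (-2 + a * 2 + b * 2 + (1 + (-1 + a * 2)⁻¹)⁻¹)⁻¹)⁻¹ := by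
    have := inv_pos.mpr q4; linarith
  have p1 : (1 - a * b * 4 - a ^ 2 * 4) < 0 := by nlinarith
  have p2 : a * (1 - a * b * 4 - a ^ 2 * 4)⁻¹ + b ≠ 0 := by
    have : (-1/2:ℚ) < a * (1 - a * b * 4 - a ^ 2 * 4)⁻¹ := by
      rw [← div_eq_mul_inv, lt_div_iff_of_neg p1]; nlinarith
    linarith
  field_simp [show a ≠ 0 by linarith, q1.ne', q2.ne', q3.ne', q4.ne', q5.ne', p1.ne, p2]
  have n1 : (0:ℚ) < 2 * (-1 + a + b) * (-1 + a * 2 + 1) + (-1 + a * 2) := by nlinarith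
  have n2 : (0:ℚ) < 2 * (-1 + a + b) * (-1 + a * 2 + 1) + (-1 + a * 2) + (-1 + a * 2 + 1) := by nlinarith
  rw [one_add_div n1.ne', one_div_div, add_div' _ _ _ n2.ne', div_div_eq_mul_div]
  have n3 : (0:ℚ) < (-1 + b * 2) * (2 * (-1 + a + b) * (-1 + a * 2 + 1) + (-1 + a * 2) + (-1 + a * 2 + 1)) + (2 * (-1 + a + b) * (-1 + a * 2 + 1) + (-1 + a * 2)) := by nlinarith
  have n4 : a + b * (1 - a * b * 4 - a ^ 2 * 4) ≠ 0 := by nlinarith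
  rw [div_eq_div_iff n4 n3.ne']
  ring
end

section
/- The continued fraction identity [2x, 2y, -2(x+y), 2x] = [2x-1, 1, -2y-1, 2(x+y)-1, 1, 2x-1] holds for all integers x > 0, y < 0 with x + y > 0. -/
theorem stmt17 (x y : ℤ) (hx : 0 < x) (hy : y < 0) (hxy : 0 < x + y) :
    cfrac [2 * x, 2 * y, -2 * (x + y), 2 * x]
      = cfrac [2 * x - 1, 1, -2 * y - 1, 2 * (x + y) - 1, 1, 2 * x - 1] := by
  have hx' : (1:ℚ) ≤ (x:ℚ) := by exact_mod_cast hx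
  have hy0 : y ≤ -1 := by omega
  have hy' : (y:ℚ) ≤ -1 := by exact_mod_cast hy0
  have hxy' : (1:ℚ) ≤ (x:ℚ) + y := by exact_mod_cast hxy
  simp only [cfrac, inv_zero, add_zero]
  push_cast
  set X := (x:ℚ); set Y := (y:ℚ)
  set D : ℚ := 4*X*(X+Y) - 1 with hDdef
  have hDpos : 0 < D := by rw [hDdef]; nlinarith
  have hD : D ≠ 0 := ne_of_gt hDpos
  have hX : 2*X ≠ 0 := by positivity
  have hX1 : 2*X - 1 ≠ 0 := by nlinarith
  set E : ℚ := 2*Y*D - 2*X with hEdef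
  have hEneg : E < 0 := by rw [hEdef]; nlinarith
  have hE : E ≠ 0 := ne_of_lt hEneg
  -- LHS
  have e1 : -2*(X+Y) + (2*X)⁻¹ = -(D/(2*X)) := by
    rw [hDdef]; field_simp; ring
  have e2 : 2*Y + (-(D/(2*X)))⁻¹ = E/D := by
    rw [inv_neg, inv_div, hEdef]; field_simp; ring
  -- RHS
  have f1 : 1 + (2*X - 1)⁻¹ = (2*X)/(2*X-1) := by field_simp; ring
  have f2 : 2*(X+Y) - 1 + ((2*X)/(2*X-1))⁻¹ = (2*(X+Y)*(2*X) - 1)/(2*X) := by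
    rw [inv_div]; field_simp; ring
  have hG : 2*(X+Y)*(2*X) - 1 ≠ 0 := by nlinarith
  have f3 : -2*Y - 1 + ((2*(X+Y)*(2*X) - 1)/(2*X))⁻¹ = ((-2*Y-1)*D + 2*X)/D := by
    have hG2 : 2*(X+Y)*(2*X) - 1 = D := by rw [hDdef]; ring
    rw [inv_div, hG2, add_div' _ _ _ hD]
  have hF : (-2*Y-1)*D + 2*X ≠ 0 := by
    have : 0 < (-2*Y-1)*D + 2*X := by nlinarith
    linarith
  have f4 : 1 + (((-2*Y-1)*D + 2*X)/D)⁻¹ = (-E)/((-2*Y-1)*D + 2*X) := by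
    rw [inv_div, add_div' _ _ _ hF]
    congr 1
    rw [hEdef]; ring
  have f5 : (((-E)/((-2*Y-1)*D + 2*X)))⁻¹ = ((-2*Y-1)*D + 2*X)/(-E) := inv_div _ _
  rw [e1, e2, f1, f2, f3, f4, f5, inv_div, div_neg]
  have key : D/E = -1 - ((-2*Y-1)*D + 2*X)/E := by
    rw [eq_sub_iff_add_eq, ← add_div, div_eq_iff hE, hEdef]
    ring
  rw [key]
  ring
end
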